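/- Let q ≥ 2 be a prime number and let B = B(q,q). Then the characteristic polynomial of the real q²×q² matrix Bᵀ B equals (X − q²)·(X − q)^{q(q−1)}·X^{q−1}; that is, B has a simple singular value q, q(q−1) singular values equal to √q, and q−1 singular values equal to 0. Moreover √q ≤ 2√(q−1), so B(q,q) defines a Ramanujan graph of degree q on q² vertices. -/

import Mathlib

open Matrix Polynomial

/-- The `q × q` cyclic-shift permutation matrix over `ℝ`:
`P i j = 1` iff `j ≡ i - 1 (mod q)`. -/
def cyclicShift (q : ℕ) : Matrix (Fin q) (Fin q) ℝ :=
  Matrix.of fun i j => if (j : ZMod q) = (i : ZMod q) - 1 then 1 else 0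

lemma fin_cast_inj {q : ℕ} [NeZero q] (i j : Fin q) :
    (i : ZMod q) = (j : ZMod q) ↔ i = j := by
  constructor
  · intro h
    have := congrArg ZMod.val h
    rw [ZMod.val_natCast_of_lt i.isLt, ZMod.val_natCast_of_lt j.isLt] at this
    exact Fin.ext this
  · rintro rfl; rfl

lemma cyclicShift_pow_apply (q : ℕ) [NeZero q] (k : ℕ) (i j : Fin q) :
    (cyclicShift q ^ k) i j = if (j : ZMod q) = (i : ZMod q) - k then 1 else 0 := by
  induction k generalizing i j with
  | zero =>
    simp only [pow_zero, Nat.cast_zero, sub_zero]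
    rw [Matrix.one_apply]
    simp [fin_cast_inj, eq_comm]
  | succ k ih =>
    rw [pow_succ, Matrix.mul_apply]
    -- entries: sum over t of (P^k) i t * P t j
    have key : ∀ t : Fin q, (cyclicShift q ^ k) i t * cyclicShift q t j
        = if (t : ZMod q) = (i : ZMod q) - k ∧ (j : ZMod q) = (t : ZMod q) - 1 then 1 else 0 := by
      intro t
      rw [ih, cyclicShift]
      simp only [Matrix.of_apply]
      by_cases h1 : (t : ZMod q) = (i : ZMod q) - k <;>
        by_cases h2 : (j : ZMod q) = (t : ZMod q) - 1 <;> simp [h1, h2]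
    rw [Finset.sum_congr rfl fun t _ => key t]
    -- the unique t
    set c : ZMod q := (i : ZMod q) - k with hc
    set t0 : Fin q := ⟨c.val, ZMod.val_lt c⟩ with ht0
    have hcast : (t0 : ZMod q) = c := by
      have := ZMod.natCast_val (R := ZMod q) c
      exact ZMod.natCast_zmod_val c
    rw [Finset.sum_eq_single t0]
    · have hd : ((i : ZMod q) - ((k : ZMod q) + 1)) = c - 1 := by rw [hc]; ring
      simp [hcast, hd]
    · intro t _ hne
      have : ¬ ((t : ZMod q) = c) := by
        intro h; apply hne
        rw [← fin_cast_inj t t0, hcast]; exact h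
      simp [this]
    · intro h; exact absurd (Finset.mem_univ t0) h

/-- The `q² × lq` array-code matrix `B(q,l)`, with `q` block-rows and `l` block-columns
of `q × q` blocks, whose `(i,j)` block (`0`-indexed) is `P^(i*j)`. -/
def arrayB (q l : ℕ) : Matrix (Fin q × Fin q) (Fin l × Fin q) ℝ :=
  Matrix.of fun r c => (cyclicShift q ^ ((r.1 : ℕ) * (c.1 : ℕ))) r.2 c.2

lemma sum_ite_fin {q : ℕ} [NeZero q] (c : ZMod q) (f : ZMod q → ℝ) :
    ∑ t : Fin q, (if (t : ZMod q) = c then f (t : ZMod q) else 0) = f c := by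
  set t0 : Fin q := ⟨c.val, ZMod.val_lt c⟩ with ht0
  have hcast : (t0 : ZMod q) = c := by
    have := ZMod.natCast_val (R := ZMod q) c
    exact ZMod.natCast_zmod_val c
  rw [Finset.sum_eq_single t0]
  · simp [hcast]
  · intro t _ hne
    have : ¬ ((t : ZMod q) = c) := fun h => hne (by rw [← fin_cast_inj t t0, hcast]; exact h)
    simp [this]
  · intro h; exact absurd (Finset.mem_univ t0) h

def Nmat (q : ℕ) : Matrix (Fin q × Fin q) (Fin q × Fin q) ℝ :=
  Matrix.of fun r c => if r.1 = c.1 then (if r.2 = c.2 then q else 0) else 1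

lemma BtB (q : ℕ) (hq : q.Prime) : (arrayB q q)ᵀ * arrayB q q = Nmat q := by
  haveI : Fact q.Prime := ⟨hq⟩
  haveI : NeZero q := ⟨hq.ne_zero⟩
  ext ⟨j, s⟩ ⟨j', s'⟩
  rw [Matrix.mul_apply, Fintype.sum_prod_type]
  have hterm : ∀ i t : Fin q, (arrayB q q)ᵀ (j, s) (i, t) * arrayB q q (i, t) (j', s')
      = (if ((t : ℕ) : ZMod q) = ((s : ℕ) : ZMod q) + ((i : ℕ) : ZMod q) * ((j : ℕ) : ZMod q)
          then (fun z : ZMod q =>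
            (if ((s' : ℕ) : ZMod q) = z - ((i : ℕ) : ZMod q) * ((j' : ℕ) : ZMod q)
              then (1:ℝ) else 0)) ((t : ℕ) : ZMod q) else 0) := by
    intro i t
    rw [Matrix.transpose_apply]
    show (cyclicShift q ^ ((i : ℕ) * (j : ℕ))) t s * (cyclicShift q ^ ((i : ℕ) * (j' : ℕ))) t s'
      = _
    rw [cyclicShift_pow_apply, cyclicShift_pow_apply]
    push_cast
    by_cases h : ((s : ℕ) : ZMod q)
        = ((t : ℕ) : ZMod q) - ((i : ℕ) : ZMod q) * ((j : ℕ) : ZMod q)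
    · have h' : ((t : ℕ) : ZMod q)
          = ((s : ℕ) : ZMod q) + ((i : ℕ) : ZMod q) * ((j : ℕ) : ZMod q) := by
        linear_combination -h
      rw [if_pos h, if_pos h', one_mul]
    · have h' : ¬ (((t : ℕ) : ZMod q)
          = ((s : ℕ) : ZMod q) + ((i : ℕ) : ZMod q) * ((j : ℕ) : ZMod q)) :=
        fun hh => h (by linear_combination -hh)
      rw [if_neg h, if_neg h', zero_mul]
  have hinner : ∀ i : Fin q,
      (∑ t : Fin q, (arrayB q q)ᵀ (j, s) (i, t) * arrayB q q (i, t) (j', s'))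
      = (if ((s' : ℕ) : ZMod q) = ((s : ℕ) : ZMod q)
            + ((i : ℕ) : ZMod q) * ((j : ℕ) : ZMod q)
            - ((i : ℕ) : ZMod q) * ((j' : ℕ) : ZMod q) then (1:ℝ) else 0) := by
    intro i
    rw [Finset.sum_congr rfl fun t _ => hterm i t]
    exact sum_ite_fin (((s : ℕ) : ZMod q) + ((i : ℕ) : ZMod q) * ((j : ℕ) : ZMod q))
      (fun z => if ((s' : ℕ) : ZMod q) = z - ((i : ℕ) : ZMod q) * ((j' : ℕ) : ZMod q)
        then (1:ℝ) else 0)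
  rw [Finset.sum_congr rfl fun i _ => hinner i]
  by_cases hj : j = j'
  · subst hj
    simp only [sub_self, add_sub_cancel_right]
    by_cases hs : s = s'
    · subst hs
      rw [Finset.sum_congr rfl fun i _ => if_pos rfl]
      simp [Nmat]
    · have hss : ¬ (((s' : ℕ) : ZMod q) = ((s : ℕ) : ZMod q)) :=
        fun h => hs (((fin_cast_inj s' s).mp h).symm)
      simp [Nmat, hss, hs]
  · have hu : ((j : ℕ) : ZMod q) - ((j' : ℕ) : ZMod q) ≠ 0 := by
      intro h
      exact hj ((fin_cast_inj j j').mp (by linear_combination h))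
    set d : ZMod q := (((s' : ℕ) : ZMod q) - ((s : ℕ) : ZMod q))
        / (((j : ℕ) : ZMod q) - ((j' : ℕ) : ZMod q)) with hd
    have hcond : ∀ i : Fin q,
        (if ((s' : ℕ) : ZMod q) = ((s : ℕ) : ZMod q)
            + ((i : ℕ) : ZMod q) * ((j : ℕ) : ZMod q)
            - ((i : ℕ) : ZMod q) * ((j' : ℕ) : ZMod q) then (1:ℝ) else 0)
        = (if ((i : ℕ) : ZMod q) = d then (fun _ : ZMod q => (1:ℝ)) ((i : ℕ) : ZMod q)
            else 0) := by
      intro i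
      have hiff : (((s' : ℕ) : ZMod q) = ((s : ℕ) : ZMod q)
            + ((i : ℕ) : ZMod q) * ((j : ℕ) : ZMod q)
            - ((i : ℕ) : ZMod q) * ((j' : ℕ) : ZMod q)) ↔ (((i : ℕ) : ZMod q) = d) := by
        rw [hd, eq_div_iff hu]
        constructor
        · intro h; linear_combination -h
        · intro h; linear_combination -h
      simp only [hiff]
    rw [Finset.sum_congr rfl fun i _ => hcond i, sum_ite_fin d (fun _ => (1:ℝ))]
    simp [Nmat, hj]

def Kmat (q : ℕ) : Matrix (Fin q × Fin q) (Fin q × Fin q) ℝ :=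
  Matrix.of fun r c => if r.1 = c.1 then 0 else 1

def Jmat (q : ℕ) : Matrix (Fin q × Fin q) (Fin q × Fin q) ℝ :=
  Matrix.of fun _ _ => 1

lemma Nmat_herm (q : ℕ) : (Nmat q).IsHermitian := by
  show (Nmat q)ᴴ = Nmat q
  ext r c
  simp only [Matrix.conjTranspose_apply, Nmat, Matrix.of_apply, star_trivial]
  by_cases h1 : r.1 = c.1 <;> by_cases h2 : r.2 = c.2
  · simp [h1, h2]
  · simp [h1, h2, show ¬(c.2 = r.2) from fun h => h2 h.symm]
  · simp [h1, show ¬(c.1 = r.1) from fun h => h1 h.symm]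
  · simp [h1, show ¬(c.1 = r.1) from fun h => h1 h.symm]

lemma Nmat_sub_smul_one (q : ℕ) : Nmat q - (q : ℝ) • 1 = Kmat q := by
  ext r c
  simp only [Matrix.sub_apply, Matrix.smul_apply, Matrix.one_apply, Nmat, Kmat, Matrix.of_apply]
  by_cases h1 : r.1 = c.1 <;> by_cases h2 : r.2 = c.2
  · have : r = c := Prod.ext h1 h2
    simp [this]
  · have : ¬ (r = c) := fun h => h2 (by rw [h])
    simp [h1, h2, this]
  · have : ¬ (r = c) := fun h => h1 (by rw [h])
    simp [h1, this]
  · have : ¬ (r = c) := fun h => h1 (by rw [h])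
    simp [h1, this]

lemma Nmat_mul_Kmat (q : ℕ) :
    Nmat q * Kmat q = ((q : ℝ) * ((q : ℝ) - 1)) • Jmat q := by
  ext r c
  rw [Matrix.mul_apply, Fintype.sum_prod_type]
  have hterm : ∀ u1 : Fin q, ∑ u2 : Fin q, Nmat q r (u1, u2) * Kmat q (u1, u2) c
      = (q : ℝ) - (if u1 = c.1 then (q : ℝ) else 0) := by
    intro u1
    by_cases hc : u1 = c.1
    · simp [Nmat, Kmat, hc]
    · simp only [Nmat, Kmat, Matrix.of_apply, hc, if_neg hc, if_false, mul_one]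
      by_cases hr : r.1 = u1
      · simp [hr, Finset.sum_ite_eq']
      · simp [hr]
  rw [Finset.sum_congr rfl fun u1 _ => hterm u1]
  simp [Finset.sum_sub_distrib, Jmat, mul_sub]

lemma Nmat_mul_Jmat (q : ℕ) :
    Nmat q * Jmat q = ((q : ℝ) * (q : ℝ)) • Jmat q := by
  ext r c
  rw [Matrix.mul_apply, Fintype.sum_prod_type]
  have hterm : ∀ u1 : Fin q, ∑ u2 : Fin q, Nmat q r (u1, u2) * Jmat q (u1, u2) c = (q : ℝ) := by
    intro u1
    by_cases hr : r.1 = u1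
    · simp [Nmat, Jmat, hr, Finset.sum_ite_eq']
    · simp [Nmat, Jmat, hr]
  rw [Finset.sum_congr rfl fun u1 _ => hterm u1]
  simp [Jmat]

lemma Nmat_poly_zero (q : ℕ) :
    (Nmat q - ((q : ℝ) * (q : ℝ)) • 1) * (Nmat q * (Nmat q - (q : ℝ) • 1)) = 0 := by
  rw [Nmat_sub_smul_one, Nmat_mul_Kmat, Matrix.mul_smul, sub_mul, Matrix.smul_mul,
    Matrix.one_mul, Nmat_mul_Jmat, sub_self, smul_zero]

lemma Nmat_trace (q : ℕ) : (Nmat q).trace = (q : ℝ) * (q : ℝ) * (q : ℝ) := by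
  rw [Matrix.trace]
  have : ∀ r : Fin q × Fin q, (Nmat q).diag r = (q : ℝ) := by
    intro r; simp [Matrix.diag, Nmat]
  rw [Finset.sum_congr rfl fun r _ => this r]
  simp [Fintype.card_prod, mul_assoc]

lemma Nmat_sq_trace (q : ℕ) :
    (Nmat q * Nmat q).trace = (q : ℝ) * (q : ℝ) * ((q : ℝ) * (q : ℝ) + (q : ℝ) * (q : ℝ) - q) := by
  rw [Matrix.trace]
  have hdiag : ∀ r : Fin q × Fin q, (Nmat q * Nmat q).diag r
      = (q : ℝ) * (q : ℝ) + ((q : ℝ) * (q : ℝ) - (q : ℝ)) := by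
    intro r
    rw [Matrix.diag_apply, Matrix.mul_apply, Fintype.sum_prod_type]
    have hterm : ∀ u1 : Fin q, ∑ u2 : Fin q, Nmat q r (u1, u2) * Nmat q (u1, u2) r
        = (q : ℝ) + (if u1 = r.1 then (q : ℝ) * (q : ℝ) - (q : ℝ) else 0) := by
      intro u1
      by_cases hr : r.1 = u1
      · have : ∀ u2 : Fin q, Nmat q r (u1, u2) * Nmat q (u1, u2) r
            = if r.2 = u2 then (q : ℝ) * (q : ℝ) else 0 := by
          intro u2
          simp only [Nmat, Matrix.of_apply, if_pos hr, if_pos hr.symm]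
          by_cases h2 : r.2 = u2
          · simp [h2]
          · have h2' : ¬ (u2 = r.2) := fun h => h2 h.symm
            simp [h2, h2']
        rw [Finset.sum_congr rfl fun u2 _ => this u2, if_pos hr.symm]
        simp only [Finset.sum_ite_eq, Finset.mem_univ, if_true]
        ring
      · have hr' : ¬ (u1 = r.1) := fun h => hr h.symm
        simp [Nmat, hr, hr']
    rw [Finset.sum_congr rfl fun u1 _ => hterm u1]
    simp [Finset.sum_add_distrib, Finset.sum_ite_eq']
  rw [Finset.sum_congr rfl fun r _ => hdiag r]
  simp [Fintype.card_prod]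
  ring

section Spectral
variable {n : Type*} [Fintype n] [DecidableEq n]

lemma charpoly_diagonal' (d : n → ℝ) :
    (Matrix.diagonal d).charpoly = ∏ i, (X - C (d i)) := by
  rw [Matrix.charpoly]
  have h : charmatrix (Matrix.diagonal d) = Matrix.diagonal (fun i => (X : ℝ[X]) - C (d i)) := by
    ext i j
    by_cases hij : i = j
    · subst hij
      rw [charmatrix_apply_eq, Matrix.diagonal_apply_eq, Matrix.diagonal_apply_eq]
    · rw [charmatrix_apply_ne _ _ _ hij, Matrix.diagonal_apply_ne _ hij,
        Matrix.diagonal_apply_ne _ hij]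
      simp
  rw [h, Matrix.det_diagonal]

lemma charpoly_unitary_conj (U : Matrix.unitaryGroup n ℝ) (A : Matrix n n ℝ) :
    ((U : Matrix n n ℝ) * A * star (U : Matrix n n ℝ)).charpoly = A.charpoly := by
  have hUW : (U : Matrix n n ℝ) * star (U : Matrix n n ℝ) = 1 :=
    Matrix.mem_unitaryGroup_iff.mp U.2
  set f := (RingHom.mapMatrix (C : ℝ →+* ℝ[X]) : Matrix n n ℝ →+* Matrix n n ℝ[X]) with hf
  have hcomm : Matrix.scalar n (X : ℝ[X]) * f (U : Matrix n n ℝ)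
      = f (U : Matrix n n ℝ) * Matrix.scalar n (X : ℝ[X]) :=
    (Matrix.scalar_commute (X : ℝ[X]) (fun r' => Commute.all _ _) _).eq
  have hcm : charmatrix ((U : Matrix n n ℝ) * A * star (U : Matrix n n ℝ))
      = f (U : Matrix n n ℝ) * charmatrix A * f (star (U : Matrix n n ℝ)) := by
    have hdef : ∀ M : Matrix n n ℝ, charmatrix M = Matrix.scalar n (X : ℝ[X]) - f M :=
      fun _ => rfl
    rw [hdef, hdef, _root_.map_mul, _root_.map_mul, Matrix.mul_sub, Matrix.sub_mul]
    congr 1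
    rw [← hcomm, Matrix.mul_assoc, ← _root_.map_mul, hUW, _root_.map_one, Matrix.mul_one]
  rw [Matrix.charpoly, Matrix.charpoly, hcm, Matrix.det_mul, Matrix.det_mul]
  have hre : (f (U : Matrix n n ℝ)).det * (charmatrix A).det * (f (star (U : Matrix n n ℝ))).det
      = (charmatrix A).det * (f (U : Matrix n n ℝ) * f (star (U : Matrix n n ℝ))).det := by
    rw [Matrix.det_mul]; ring
  rw [hre, ← _root_.map_mul f, hUW, _root_.map_one, Matrix.det_one, mul_one]

lemma herm_charpoly {A : Matrix n n ℝ} (hA : A.IsHermitian) :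
    A.charpoly = ∏ i, (X - C (hA.eigenvalues i)) := by
  have hof : (RCLike.ofReal ∘ hA.eigenvalues : n → ℝ) = hA.eigenvalues := by
    rw [RCLike.ofReal_real_eq_id, Function.id_comp]
  conv_lhs => rw [hA.spectral_theorem, Unitary.conjStarAlgAut_apply]
  rw [charpoly_unitary_conj, hof, charpoly_diagonal']

lemma herm_trace {A : Matrix n n ℝ} (hA : A.IsHermitian) :
    A.trace = ∑ i, hA.eigenvalues i := by
  have hof : (RCLike.ofReal ∘ hA.eigenvalues : n → ℝ) = hA.eigenvalues := by
    rw [RCLike.ofReal_real_eq_id, Function.id_comp]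
  have hD := hA.conjStarAlgAut_star_eigenvectorUnitary
  simp only [Unitary.conjStarAlgAut_apply, star_star, Unitary.coe_star] at hD
  rw [hof] at hD
  have hUW : (hA.eigenvectorUnitary : Matrix n n ℝ) * star (hA.eigenvectorUnitary : Matrix n n ℝ)
      = 1 := Matrix.mem_unitaryGroup_iff.mp (hA.eigenvectorUnitary).2
  calc A.trace = (star (hA.eigenvectorUnitary : Matrix n n ℝ) * A
        * (hA.eigenvectorUnitary : Matrix n n ℝ)).trace := by
        rw [Matrix.trace_mul_cycle, hUW, Matrix.one_mul]
    _ = (Matrix.diagonal hA.eigenvalues).trace := by rw [hD]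
    _ = ∑ i, hA.eigenvalues i := Matrix.trace_diagonal _

lemma herm_trace_sq {A : Matrix n n ℝ} (hA : A.IsHermitian) :
    (A * A).trace = ∑ i, hA.eigenvalues i * hA.eigenvalues i := by
  have hof : (RCLike.ofReal ∘ hA.eigenvalues : n → ℝ) = hA.eigenvalues := by
    rw [RCLike.ofReal_real_eq_id, Function.id_comp]
  have hD := hA.conjStarAlgAut_star_eigenvectorUnitary
  simp only [Unitary.conjStarAlgAut_apply, star_star, Unitary.coe_star] at hD
  rw [hof] at hD
  set U := (hA.eigenvectorUnitary : Matrix n n ℝ) with hU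
  have hUW : U * star U = 1 := Matrix.mem_unitaryGroup_iff.mp (hA.eigenvectorUnitary).2
  have hDD : Matrix.diagonal hA.eigenvalues * Matrix.diagonal hA.eigenvalues
      = star U * (A * A) * U := by
    rw [← hD]
    calc (star U * A * U) * (star U * A * U)
        = star U * A * ((U * star U) * (A * U)) := by simp only [Matrix.mul_assoc]
      _ = star U * (A * A) * U := by rw [hUW, Matrix.one_mul]; simp only [Matrix.mul_assoc]
  calc (A * A).trace = (star U * (A * A) * U).trace := by
        rw [Matrix.trace_mul_cycle, hUW, Matrix.one_mul]
    _ = (Matrix.diagonal hA.eigenvalues * Matrix.diagonal hA.eigenvalues).trace := by rw [hDD]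
    _ = ∑ i, hA.eigenvalues i * hA.eigenvalues i := by
        rw [Matrix.diagonal_mul_diagonal, Matrix.trace_diagonal]

end Spectral

lemma Nmat_eig_mem (q : ℕ) (hH : (Nmat q).IsHermitian) (i : Fin q × Fin q) :
    hH.eigenvalues i = 0 ∨ hH.eigenvalues i = q ∨ hH.eigenvalues i = (q : ℝ) * q := by
  set t := hH.eigenvalues i with ht
  set v := ⇑(hH.eigenvectorBasis i) with hv
  have hmv : Nmat q *ᵥ v = t • v := hH.mulVec_eigenvectorBasis i
  have hvne : v ≠ 0 := by
    intro h
    apply hH.eigenvectorBasis.orthonormal.ne_zero i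
    ext x
    exact congrFun h x
  have h1 : (Nmat q - (q : ℝ) • 1) *ᵥ v = (t - q) • v := by
    rw [Matrix.sub_mulVec, hmv, Matrix.smul_mulVec, Matrix.one_mulVec, ← sub_smul]
  have h2 : (Nmat q * (Nmat q - (q : ℝ) • 1)) *ᵥ v = (t * (t - q)) • v := by
    rw [← Matrix.mulVec_mulVec, h1, Matrix.mulVec_smul, hmv, smul_smul, mul_comm (t - (q:ℝ)) t]
  have h3 : ((Nmat q - ((q : ℝ) * (q : ℝ)) • 1) * (Nmat q * (Nmat q - (q : ℝ) • 1))) *ᵥ v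
      = ((t - (q : ℝ) * (q : ℝ)) * (t * (t - q))) • v := by
    rw [← Matrix.mulVec_mulVec, h2, Matrix.mulVec_smul, Matrix.sub_mulVec, hmv,
      Matrix.smul_mulVec, Matrix.one_mulVec, ← sub_smul, smul_smul, mul_comm]
  rw [Nmat_poly_zero, Matrix.zero_mulVec] at h3
  obtain ⟨x, hx⟩ := Function.ne_iff.mp hvne
  have h4 : ((t - (q : ℝ) * (q : ℝ)) * (t * (t - q))) * v x = 0 := by
    have := congrFun h3.symm x
    simpa using this
  have hc : (t - (q : ℝ) * (q : ℝ)) * (t * (t - q)) = 0 := by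
    rcases mul_eq_zero.mp h4 with h | h
    · exact h
    · exact absurd h hx
  rcases mul_eq_zero.mp hc with h | h
  · exact Or.inr (Or.inr (sub_eq_zero.mp h))
  · rcases mul_eq_zero.mp h with h' | h'
    · exact Or.inl h'
    · exact Or.inr (Or.inl (sub_eq_zero.mp h'))

lemma prod_eig (q : ℕ) (hq2 : 2 ≤ q) (f : Fin q × Fin q → ℝ)
    (hmem : ∀ i, f i = 0 ∨ f i = q ∨ f i = (q : ℝ) * q)
    (hs : ∑ i, f i = (q : ℝ) * q * q)
    (hs2 : ∑ i, f i * f i = (q : ℝ) * q * ((q : ℝ) * q + (q : ℝ) * q - q)) :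
    ∏ i, (X - C (f i))
      = (X - C ((q : ℝ) ^ 2)) * (X - C (q : ℝ)) ^ (q * (q - 1)) * X ^ (q - 1) := by
  classical
  have hq1 : (1 : ℝ) < q := by exact_mod_cast hq2
  set S2 := Finset.univ.filter (fun i : Fin q × Fin q => f i = (q : ℝ) * q) with hS2
  set S1 := Finset.univ.filter (fun i : Fin q × Fin q => f i = (q : ℝ)) with hS1
  set S0 := Finset.univ.filter (fun i : Fin q × Fin q => f i = 0) with hS0
  have hm0 : ∀ i ∈ S0, f i = 0 := fun i hi => (Finset.mem_filter.mp hi).2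
  have hm1 : ∀ i ∈ S1, f i = (q : ℝ) := fun i hi => (Finset.mem_filter.mp hi).2
  have hm2 : ∀ i ∈ S2, f i = (q : ℝ) * q := fun i hi => (Finset.mem_filter.mp hi).2
  have hd01 : Disjoint S0 S1 := by
    rw [Finset.disjoint_left]
    intro a h0 h1
    have := (hm0 a h0).symm.trans (hm1 a h1)
    linarith
  have hd02 : Disjoint S0 S2 := by
    rw [Finset.disjoint_left]
    intro a h0 h1
    have := (hm0 a h0).symm.trans (hm2 a h1)
    nlinarith
  have hd12 : Disjoint S1 S2 := by
    rw [Finset.disjoint_left]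
    intro a h0 h1
    have := (hm1 a h0).symm.trans (hm2 a h1)
    nlinarith
  have hd012 : Disjoint (S0 ∪ S1) S2 := Finset.disjoint_union_left.mpr ⟨hd02, hd12⟩
  have hunion : S0 ∪ S1 ∪ S2 = Finset.univ := by
    ext i
    simp only [hS0, hS1, hS2, Finset.mem_union, Finset.mem_filter, Finset.mem_univ, true_and,
      iff_true]
    exact (hmem i).elim (fun h => Or.inl (Or.inl h)) (fun h => h.elim
      (fun h' => Or.inl (Or.inr h')) (fun h' => Or.inr h'))
  have hsplit : ∀ g : ℝ → ℝ, ∑ i, g (f i)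
      = S0.card • g 0 + S1.card • g (q : ℝ) + S2.card • g ((q : ℝ) * q) := by
    intro g
    have e0 : ∀ i ∈ S0, g (f i) = g 0 := fun i hi => by rw [hm0 i hi]
    have e1 : ∀ i ∈ S1, g (f i) = g (q : ℝ) := fun i hi => by rw [hm1 i hi]
    have e2 : ∀ i ∈ S2, g (f i) = g ((q : ℝ) * q) := fun i hi => by rw [hm2 i hi]
    rw [← hunion, Finset.sum_union hd012, Finset.sum_union hd01,
      Finset.sum_congr rfl e0, Finset.sum_congr rfl e1, Finset.sum_congr rfl e2,
      Finset.sum_const, Finset.sum_const, Finset.sum_const]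
  have E1 : (S1.card : ℝ) * q + (S2.card : ℝ) * ((q : ℝ) * q) = (q : ℝ) * q * q := by
    have h := hsplit id
    simp only [nsmul_eq_mul, id_eq] at h
    rw [hs] at h
    linarith
  have E2 : (S1.card : ℝ) * ((q : ℝ) * q) + (S2.card : ℝ) * ((q : ℝ) * q * ((q : ℝ) * q))
      = (q : ℝ) * q * ((q : ℝ) * q + (q : ℝ) * q - q) := by
    have h := hsplit (fun x => x * x)
    simp only [nsmul_eq_mul] at h
    rw [hs2] at h
    linarith [h]
  have hy : (S2.card : ℝ) = 1 := by
    have hq0 : (0 : ℝ) < q := by linarith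
    have hne : ((q : ℝ) * q * q * ((q : ℝ) - 1)) ≠ 0 :=
      ne_of_gt (mul_pos (mul_pos (mul_pos hq0 hq0) hq0) (by linarith))
    have e3 : (S2.card : ℝ) * ((q : ℝ) * q * q * ((q : ℝ) - 1))
        = 1 * ((q : ℝ) * q * q * ((q : ℝ) - 1)) := by linear_combination E2 - (q : ℝ) * E1
    exact mul_right_cancel₀ hne e3
  have hx : (S1.card : ℝ) = (q : ℝ) * q - q := by
    have hqne : (q : ℝ) ≠ 0 := by linarith
    have e4 : (S1.card : ℝ) * (q : ℝ) = ((q : ℝ) * q - q) * q := by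
      linear_combination E1 - ((q : ℝ) * q) * hy
    exact mul_right_cancel₀ hqne e4
  have hs2card : S2.card = 1 := by exact_mod_cast hy
  have htm : q * (q - 1) = q * q - q := by
    have h1 : q * (q - 1) + q = q * q := by
      cases q with
      | zero => omega
      | succ n => simp only [Nat.succ_sub_one]; ring
    exact Nat.eq_sub_of_add_eq h1
  have hs1card : S1.card = q * (q - 1) := by
    have h5 : (S1.card : ℝ) + q = (q : ℝ) * q := by rw [hx]; ring
    have hnat : S1.card + q = q * q := by exact_mod_cast h5
    rw [htm]
    exact Nat.eq_sub_of_add_eq hnat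
  have hcards : S0.card + S1.card + S2.card = q * q := by
    have h6 := congrArg Finset.card hunion
    rwa [Finset.card_union_of_disjoint hd012, Finset.card_union_of_disjoint hd01,
      Finset.card_univ, Fintype.card_prod, Fintype.card_fin] at h6
  have hs0card : S0.card = q - 1 := by
    rw [hs1card, hs2card, htm] at hcards
    have hqle : q ≤ q * q := Nat.le_mul_of_pos_left q (by omega)
    omega
  have hp0 : ∏ i ∈ S0, (X - C (f i)) = X ^ (q - 1) := by
    have e0 : ∀ i ∈ S0, (X - C (f i)) = X := fun i hi => by rw [hm0 i hi]; simp
    rw [Finset.prod_congr rfl e0, Finset.prod_const, hs0card]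
  have hp1 : ∏ i ∈ S1, (X - C (f i)) = (X - C (q : ℝ)) ^ (q * (q - 1)) := by
    have e1 : ∀ i ∈ S1, (X - C (f i)) = X - C (q : ℝ) := fun i hi => by rw [hm1 i hi]
    rw [Finset.prod_congr rfl e1, Finset.prod_const, hs1card]
  have hp2 : ∏ i ∈ S2, (X - C (f i)) = X - C ((q : ℝ) ^ 2) := by
    have e2 : ∀ i ∈ S2, (X - C (f i)) = X - C ((q : ℝ) ^ 2) := fun i hi => by
      rw [hm2 i hi, pow_two]
    rw [Finset.prod_congr rfl e2, Finset.prod_const, hs2card, pow_one]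
  rw [← hunion, Finset.prod_union hd012, Finset.prod_union hd01, hp0, hp1, hp2]
  ring

/-- For `l = q`, `B(q,q)` is the adjacency matrix of a `q`-regular Ramanujan graph on
`q²` vertices: its singular values are `q` (simple), `√q` with multiplicity `q(q-1)`
and `0` with multiplicity `q-1`, and `√q ≤ 2√(q-1)`. -/
theorem arrayB_self_ramanujan (q : ℕ) (hq : q.Prime) (hq2 : 2 ≤ q) :
    ((arrayB q q)ᵀ * arrayB q q).charpoly =
        (X - C ((q : ℝ) ^ 2)) * (X - C (q : ℝ)) ^ (q * (q - 1)) * X ^ (q - 1) ∧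
      Real.sqrt (q : ℝ) ≤ 2 * Real.sqrt ((q : ℝ) - 1) := by
  constructor
  · rw [BtB q hq]
    have hH := Nmat_herm q
    rw [herm_charpoly hH]
    exact prod_eig q hq2 hH.eigenvalues (Nmat_eig_mem q hH)
      (by rw [← herm_trace hH, Nmat_trace])
      (by rw [← herm_trace_sq hH, Nmat_sq_trace])
  · have h2 : (2 : ℝ) ≤ q := by exact_mod_cast hq2
    have h4 : (q : ℝ) ≤ 2 ^ 2 * ((q : ℝ) - 1) := by linarith
    calc Real.sqrt (q : ℝ) ≤ Real.sqrt (2 ^ 2 * ((q : ℝ) - 1)) := Real.sqrt_le_sqrt h4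
      _ = 2 * Real.sqrt ((q : ℝ) - 1) := by
          rw [Real.sqrt_mul (by positivity), Real.sqrt_sq (by norm_num)]
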